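/- Let G be a group, G' an abelian normal subgroup of G, and a ∈ G such that G is generated by G' together with a. Then the map φ : G' → G', φ(g') = a g' a^{−1} g'^{−1}, is a group homomorphism of G' into itself, and its range equals the commutator subgroup [G,G] of G. In particular, every element of [G,G] is a single commutator of the form a g' a^{−1} g'^{−1} with g' ∈ G'. (Claim used in the proof of Lemma 4.1(2): [G,G] = [⟨a⟩,G'].) -/

import Mathlib

open scoped commutatorElement

/-- The claim used in the proof of Lemma 4.1(2): if `G'` is an abelian normal subgroup
of `G` and `G` is generated by `G'` together with `a`, then `g' ↦ a g' a⁻¹ g'⁻¹` is a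
homomorphism on `G'` whose range is exactly the commutator subgroup `[G,G]`. -/
theorem stmt5 (G : Type*) [Group G] (G' : Subgroup G) [G'.Normal]
    (hab : ∀ x y : G', x * y = y * x) (a : G)
    (hgen : Subgroup.closure (insert a (G' : Set G)) = ⊤) :
    (∀ x y : G, x ∈ G' → y ∈ G' →
      a * (x * y) * a⁻¹ * (x * y)⁻¹ = (a * x * a⁻¹ * x⁻¹) * (a * y * a⁻¹ * y⁻¹)) ∧
    (fun g' : G => a * g' * a⁻¹ * g'⁻¹) '' (G' : Set G) = (commutator G : Set G) := by
  have hN : G'.Normal := ‹_›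
  have hab' : ∀ x y : G, x ∈ G' → y ∈ G' → x * y = y * x := fun x y hx hy =>
    congrArg Subtype.val (hab ⟨x, hx⟩ ⟨y, hy⟩)
  -- the map φ(g) = a g a⁻¹ g⁻¹ lands in G'
  have hmemG' : ∀ x : G, x ∈ G' → a * x * a⁻¹ * x⁻¹ ∈ G' := fun x hx =>
    mul_mem (hN.conj_mem x hx a) (inv_mem hx)
  -- homomorphism property
  have hhom : ∀ x y : G, x ∈ G' → y ∈ G' →
      a * (x * y) * a⁻¹ * (x * y)⁻¹ = (a * x * a⁻¹ * x⁻¹) * (a * y * a⁻¹ * y⁻¹) := by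
    intro x y hx hy
    have h1 : x⁻¹ * (a * y * a⁻¹) = (a * y * a⁻¹) * x⁻¹ :=
      hab' _ _ (inv_mem hx) (hN.conj_mem y hy a)
    have h2 : x⁻¹ * y⁻¹ = y⁻¹ * x⁻¹ := hab' _ _ (inv_mem hx) (inv_mem hy)
    calc a * (x * y) * a⁻¹ * (x * y)⁻¹
        = a * x * y * a⁻¹ * (y⁻¹ * x⁻¹) := by group
      _ = a * x * y * a⁻¹ * (x⁻¹ * y⁻¹) := by rw [← h2]
      _ = a * x * a⁻¹ * ((a * y * a⁻¹) * x⁻¹) * y⁻¹ := by group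
      _ = a * x * a⁻¹ * (x⁻¹ * (a * y * a⁻¹)) * y⁻¹ := by rw [← h1]
      _ = (a * x * a⁻¹ * x⁻¹) * (a * y * a⁻¹ * y⁻¹) := by group
  -- the image subgroup K
  let K : Subgroup G :=
    { carrier := (fun g' : G => a * g' * a⁻¹ * g'⁻¹) '' (G' : Set G)
      one_mem' := ⟨1, one_mem G', by group⟩
      mul_mem' := by
        rintro _ _ ⟨x, hx, rfl⟩ ⟨y, hy, rfl⟩
        exact ⟨x * y, mul_mem hx hy, hhom x y hx hy⟩
      inv_mem' := by
        rintro _ ⟨x, hx, rfl⟩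
        refine ⟨x⁻¹, inv_mem hx, ?_⟩
        have := hhom x x⁻¹ hx (inv_mem hx)
        simp only [mul_inv_cancel] at this
        rw [eq_comm, inv_eq_iff_mul_eq_one, ← this]
        group }
  have hKG' : ∀ k ∈ K, k ∈ G' := by
    rintro _ ⟨x, hx, rfl⟩; exact hmemG' x hx
  -- K is normal
  have hnorm : ∀ g : G, ∀ k ∈ K, g * k * g⁻¹ ∈ K ∧ g⁻¹ * k * g ∈ K := by
    intro g
    have hg : g ∈ Subgroup.closure (insert a (G' : Set G)) := by rw [hgen]; trivial
    induction hg using Subgroup.closure_induction with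
    | mem s hs =>
        rcases hs with rfl | hs
        · rintro _ ⟨x, hx, rfl⟩
          constructor
          · exact ⟨s * x * s⁻¹, hN.conj_mem x hx s, by group⟩
          · exact ⟨s⁻¹ * x * s, by simpa using hN.conj_mem x hx s⁻¹, by group⟩
        · intro k hk
          have hk' := hKG' k hk
          have e1 : s * k = k * s := hab' _ _ hs hk'
          constructor
          · have : s * k * s⁻¹ = k := by rw [e1]; group
            rwa [this]
          · have : s⁻¹ * k * s = k := by
              rw [eq_comm, eq_comm, ← mul_left_cancel_iff (a := s), ← mul_assoc, ← mul_assoc,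
                mul_inv_cancel, one_mul, e1]
            rwa [this]
    | one => intro k hk; refine ⟨?_, ?_⟩ <;> simpa using hk
    | mul x y hx hy ihx ihy =>
        intro k hk
        constructor
        · have h1 := (ihy k hk).1
          have h2 := (ihx _ h1).1
          have : x * (y * k * y⁻¹) * x⁻¹ = x * y * k * (x * y)⁻¹ := by group
          rwa [this] at h2
        · have h1 := (ihx k hk).2
          have h2 := (ihy _ h1).2
          have : y⁻¹ * (x⁻¹ * k * x) * y = (x * y)⁻¹ * k * (x * y) := by group
          rwa [this] at h2
    | inv x hx ihx =>
        intro k hk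
        constructor
        · have := (ihx k hk).2
          simpa only [inv_inv] using this
        · have := (ihx k hk).1
          simpa only [inv_inv] using this
  haveI hKnormal : K.Normal := ⟨fun k hk g => (hnorm g k hk).1⟩
  -- commutators of elements whose classes commute mod K
  have hcomm : ∀ s t : G, ⁅s, t⁆ ∈ K →
      Commute (QuotientGroup.mk' K s) (QuotientGroup.mk' K t) := by
    intro s t h
    have h' : (QuotientGroup.mk' K) ⁅s, t⁆ = 1 := by
      rw [← MonoidHom.mem_ker, QuotientGroup.ker_mk' K]; exact h
    rw [map_commutatorElement] at h'
    exact commutatorElement_eq_one_iff_commute.mp h'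

  -- all generators commute mod K
  have hgencomm : ∀ s ∈ insert a (G' : Set G), ∀ t ∈ insert a (G' : Set G),
      Commute (QuotientGroup.mk' K s) (QuotientGroup.mk' K t) := by
    rintro s (rfl | hs) t (rfl | ht)
    · rfl
    · exact hcomm _ _ ⟨t, ht, rfl⟩
    · refine hcomm _ _ ?_
      have : (⁅t, s⁆ : G)⁻¹ ∈ K := K.inv_mem ⟨s, hs, rfl⟩
      simpa [commutatorElement_inv] using this
    · exact hcomm _ _ (by
        rw [commutatorElement_eq_one_iff_commute.mpr (hab' s t hs ht)]; exact K.one_mem)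
  -- hence every commutator lies in K
  have hle : commutator G ≤ K := by
    rw [commutator_def]
    rw [Subgroup.commutator_le]
    intro g₁ hg₁ g₂ hg₂
    clear hg₁ hg₂
    have h1 : g₁ ∈ Subgroup.closure (insert a (G' : Set G)) := by rw [hgen]; trivial
    have h2 : g₂ ∈ Subgroup.closure (insert a (G' : Set G)) := by rw [hgen]; trivial
    have hc : Commute (QuotientGroup.mk' K g₁) (QuotientGroup.mk' K g₂) := by
      induction h1, h2 using Subgroup.closure_induction₂ with
      | mem x y hx hy => exact hgencomm x hx y hy
      | one_left x hx => exact (map_one (QuotientGroup.mk' K)) ▸ Commute.one_left _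
      | one_right x hx => exact (map_one (QuotientGroup.mk' K)) ▸ Commute.one_right _
      | mul_left x y z hx hy hz ih1 ih2 => rw [map_mul]; exact Commute.mul_left ih1 ih2
      | mul_right y z x hy hz hx ih1 ih2 => rw [map_mul]; exact Commute.mul_right ih1 ih2
      | inv_left x y hx hy ih => rw [map_inv]; exact Commute.inv_left ih
      | inv_right x y hx hy ih => rw [map_inv]; exact Commute.inv_right ih
    have : ⁅g₁, g₂⁆ ∈ (QuotientGroup.mk' K).ker := by
      rw [MonoidHom.mem_ker, map_commutatorElement]
      exact commutatorElement_eq_one_iff_commute.mpr hc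
    rwa [QuotientGroup.ker_mk'] at this
  have hge : K ≤ commutator G := by
    rintro _ ⟨x, hx, rfl⟩
    exact Subgroup.commutator_mem_commutator (Subgroup.mem_top a) (Subgroup.mem_top x)
  have hK : K = commutator G := le_antisymm hge hle
  exact ⟨hhom, congrArg (fun H : Subgroup G => (H : Set G)) hK⟩
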